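/- Let x* be the unique minimizer of Γ over (ℓ, u). Then for every x ∈ (ℓ, u), Γ(x) - Γ(x*) ≥ (4/(u-ℓ)²)·(x - x*)². In particular, if Γ(x) - Γ(x*) ≤ ε for some ε > 0, then |x - x*| ≤ ((u-ℓ)/2)·√ε. -/

import Mathlib

/-- With `x*` the unique minimizer of `Γ` over `(ℓ, u)`, for every
`x ∈ (ℓ, u)` we have `Γ(x) - Γ(x*) ≥ (4/(u-ℓ)²)·(x-x*)²`; in particular, if
`Γ(x) - Γ(x*) ≤ ε` for some `ε > 0`, then `|x - x*| ≤ ((u-ℓ)/2)·√ε`. -/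
theorem stmt_11 (xL xR Δ : ℝ) (hΔ : 0 < Δ) (ℓ u : ℝ)
    (hℓ : ℓ = max (-Δ) xL) (hu : u = min Δ xR) (hℓu : ℓ < u)
    (Γ : ℝ → ℝ)
    (hΓ : ∀ x, Γ x = -Real.log (x - xL) - Real.log (xR - x)
      - Real.log (Δ + x) - Real.log (Δ - x))
    (xstar : ℝ) (hmem : xstar ∈ Set.Ioo ℓ u) (hmin : IsMinOn Γ (Set.Ioo ℓ u) xstar) :
    (∀ x ∈ Set.Ioo ℓ u, (4 / (u - ℓ) ^ 2) * (x - xstar) ^ 2 ≤ Γ x - Γ xstar) ∧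
    (∀ ε > (0 : ℝ), ∀ x ∈ Set.Ioo ℓ u, Γ x - Γ xstar ≤ ε →
      |x - xstar| ≤ ((u - ℓ) / 2) * Real.sqrt ε) := by
  have hxLl : xL ≤ ℓ := hℓ ▸ le_max_right _ _
  have hDl : -Δ ≤ ℓ := hℓ ▸ le_max_left _ _
  have huR : u ≤ xR := hu ▸ min_le_right _ _
  have huD : u ≤ Δ := hu ▸ min_le_left _ _
  have hul : 0 < u - ℓ := by linarith
  set c : ℝ := 4 / (u - ℓ) ^ 2 with hc
  have hcpos : 0 < c := by positivity
  set G' : ℝ → ℝ := fun x => -(x - xL)⁻¹ + (xR - x)⁻¹ - (Δ + x)⁻¹ + (Δ - x)⁻¹ with hG'def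
  have hposs : ∀ x ∈ Set.Ioo ℓ u,
      0 < x - xL ∧ 0 < xR - x ∧ 0 < Δ + x ∧ 0 < Δ - x := by
    rintro x ⟨h1, h2⟩
    exact ⟨by linarith, by linarith, by linarith, by linarith⟩
  -- derivative of Γ
  have hderiv : ∀ x ∈ Set.Ioo ℓ u, HasDerivAt Γ (G' x) x := by
    intro x hx
    obtain ⟨p1, p2, p3, p4⟩ := hposs x hx
    have d1 : HasDerivAt (fun y => Real.log (y - xL)) ((x - xL)⁻¹) x := by
      simpa using (((hasDerivAt_id x).sub_const xL).log p1.ne')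
    have d2 : HasDerivAt (fun y => Real.log (xR - y)) (-1 / (xR - x)) x := by
      simpa using (((hasDerivAt_id x).const_sub xR).log p2.ne')
    have d3 : HasDerivAt (fun y => Real.log (Δ + y)) ((Δ + x)⁻¹) x := by
      simpa using (((hasDerivAt_id x).const_add Δ).log p3.ne')
    have d4 : HasDerivAt (fun y => Real.log (Δ - y)) (-1 / (Δ - x)) x := by
      simpa using (((hasDerivAt_id x).const_sub Δ).log p4.ne')
    have := ((d1.neg.sub d2).sub d3).sub d4
    have heq : Γ = fun y => -Real.log (y - xL) - Real.log (xR - y)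
        - Real.log (Δ + y) - Real.log (Δ - y) := funext hΓ
    rw [heq]
    exact this.congr_deriv (by simp only [hG'def]; ring)
  -- derivative of G'
  set H : ℝ → ℝ := fun x => ((x - xL) ^ 2)⁻¹ + ((xR - x) ^ 2)⁻¹
      + ((Δ + x) ^ 2)⁻¹ + ((Δ - x) ^ 2)⁻¹ with hHdef
  have hderiv2 : ∀ x ∈ Set.Ioo ℓ u, HasDerivAt G' (H x) x := by
    intro x hx
    obtain ⟨p1, p2, p3, p4⟩ := hposs x hx
    have e1 : HasDerivAt (fun y => (y - xL)⁻¹) (-(1 : ℝ) / (x - xL) ^ 2) x :=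
      ((hasDerivAt_id x).sub_const xL).inv p1.ne'
    have e2 : HasDerivAt (fun y => (xR - y)⁻¹) (-(-1 : ℝ) / (xR - x) ^ 2) x :=
      ((hasDerivAt_id x).const_sub xR).inv p2.ne'
    have e3 : HasDerivAt (fun y => (Δ + y)⁻¹) (-(1 : ℝ) / (Δ + x) ^ 2) x :=
      ((hasDerivAt_id x).const_add Δ).inv p3.ne'
    have e4 : HasDerivAt (fun y => (Δ - y)⁻¹) (-(-1 : ℝ) / (Δ - x) ^ 2) x :=
      ((hasDerivAt_id x).const_sub Δ).inv p4.ne'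
    have := ((e1.neg.add e2).sub e3).add e4
    exact this.congr_deriv (by simp only [hHdef]; ring)
  -- lower bound on H
  have hHlb : ∀ x ∈ Set.Ioo ℓ u, 2 * c ≤ H x := by
    rintro x hx
    obtain ⟨p1, p2, p3, p4⟩ := hposs x hx
    obtain ⟨h1, h2⟩ := hx
    obtain ⟨a, ha⟩ : ∃ a, a = x - ℓ := ⟨_, rfl⟩
    obtain ⟨b, hb⟩ : ∃ b, b = u - x := ⟨_, rfl⟩
    have hapos : 0 < a := by rw [ha]; linarith
    have hbpos : 0 < b := by rw [hb]; linarith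
    have key : (a ^ 2)⁻¹ + (b ^ 2)⁻¹ ≤ H x := by
      have hA : (a ^ 2)⁻¹ ≤ ((x - xL) ^ 2)⁻¹ + ((Δ + x) ^ 2)⁻¹ := by
        rcases max_choice (-Δ) xL with hmc | hmc
        · have : Δ + x = a := by rw [ha, hℓ, hmc]; ring
          rw [this]
          have : (0:ℝ) ≤ ((x - xL) ^ 2)⁻¹ := by positivity
          linarith
        · have : x - xL = a := by rw [ha, hℓ, hmc]
          rw [this]
          have : (0:ℝ) ≤ ((Δ + x) ^ 2)⁻¹ := by positivity
          linarith
      have hB : (b ^ 2)⁻¹ ≤ ((xR - x) ^ 2)⁻¹ + ((Δ - x) ^ 2)⁻¹ := by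
        rcases min_choice Δ xR with hmc | hmc
        · have : Δ - x = b := by rw [hb, hu, hmc]
          rw [this]
          have : (0:ℝ) ≤ ((xR - x) ^ 2)⁻¹ := by positivity
          linarith
        · have : xR - x = b := by rw [hb, hu, hmc]
          rw [this]
          have : (0:ℝ) ≤ ((Δ - x) ^ 2)⁻¹ := by positivity
          linarith
      simp only [hHdef]
      linarith
    have hab : a + b = u - ℓ := by rw [ha, hb]; ring
    have key2 : 2 * c ≤ (a ^ 2)⁻¹ + (b ^ 2)⁻¹ := by
      rw [hc, ← hab]
      have h8 : 2 * (4 / (a + b) ^ 2) = 8 / (a + b) ^ 2 := by ring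
      rw [h8, div_le_iff₀ (by positivity)]
      have expand : ((a ^ 2)⁻¹ + (b ^ 2)⁻¹) * (a + b) ^ 2
          = ((a ^ 2 + b ^ 2) * (a + b) ^ 2) / (a ^ 2 * b ^ 2) := by
        field_simp
        ring
      rw [expand, le_div_iff₀ (by positivity)]
      have h4 : 0 ≤ (a - b) ^ 2 * (a ^ 2 + 4 * a * b + b ^ 2) :=
        mul_nonneg (sq_nonneg _)
          (by nlinarith [mul_pos hapos hbpos, sq_nonneg a, sq_nonneg b])
      have hexp : (a ^ 2 + b ^ 2) * (a + b) ^ 2 - 8 * (a ^ 2 * b ^ 2)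
          = (a - b) ^ 2 * (a ^ 2 + 4 * a * b + b ^ 2) := by ring
      linarith [h4, hexp]
    exact le_trans key2 key
  -- derivative of Γ vanishes at xstar
  have hG'star : G' xstar = 0 := by
    have hloc : IsLocalMin Γ xstar :=
      hmin.isLocalMin (Ioo_mem_nhds hmem.1 hmem.2)
    exact hloc.hasDerivAt_eq_zero (hderiv xstar hmem)
  -- the shifted derivative D
  set D : ℝ → ℝ := fun x => G' x - 2 * c * (x - xstar) with hDdef
  have hDstar : D xstar = 0 := by simp [hDdef, hG'star]
  have hDmono : MonotoneOn D (Set.Ioo ℓ u) := by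
    apply monotoneOn_of_hasDerivWithinAt_nonneg (f' := fun x => H x - 2 * c)
      (convex_Ioo ℓ u)
    · intro x hx
      exact (((hderiv2 x hx).sub (((hasDerivAt_id x).sub_const xstar).const_mul
        (2 * c))).continuousAt.continuousWithinAt)
    · rw [interior_Ioo]
      intro x hx
      have : HasDerivAt D (H x - 2 * c) x := by
        have := (hderiv2 x hx).sub
          ((((hasDerivAt_id x).sub_const xstar)).const_mul (2 * c))
        exact this.congr_deriv (by ring)
      exact this.hasDerivWithinAt
    · rw [interior_Ioo]
      intro x hx
      have := hHlb x hx
      linarith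
  -- h and its derivative
  set h : ℝ → ℝ := fun x => Γ x - c * (x - xstar) ^ 2 with hhdef
  have hhderiv : ∀ x ∈ Set.Ioo ℓ u, HasDerivAt h (D x) x := by
    intro x hx
    have d2 : HasDerivAt (fun y => c * (y - xstar) ^ 2) (2 * c * (x - xstar)) x := by
      have := (((hasDerivAt_id x).sub_const xstar).pow 2).const_mul c
      exact this.congr_deriv (by simp only [id_eq]; ring)
    have := (hderiv x hx).sub d2
    exact this
  -- main inequality
  have main : ∀ x ∈ Set.Ioo ℓ u, c * (x - xstar) ^ 2 ≤ Γ x - Γ xstar := by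
    intro x hx
    rcases lt_trichotomy x xstar with hlt | heq | hgt
    · -- x < xstar
      have hsub : Set.Icc x xstar ⊆ Set.Ioo ℓ u :=
        fun y hy => ⟨lt_of_lt_of_le hx.1 hy.1, lt_of_le_of_lt hy.2 hmem.2⟩
      obtain ⟨t, ht, hts⟩ := exists_hasDerivAt_eq_slope h D hlt
        (fun y hy => ((hhderiv y (hsub hy)).continuousAt).continuousWithinAt)
        (fun y hy => hhderiv y (hsub (Set.Ioo_subset_Icc_self hy)))
      have htmem : t ∈ Set.Ioo ℓ u := hsub (Set.Ioo_subset_Icc_self ht)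
      have hDt : D t ≤ 0 := by
        rw [← hDstar]
        exact hDmono htmem hmem (le_of_lt ht.2)
      have : 0 ≤ h x - h xstar := by
        rw [hts] at hDt
        have hxs : 0 < xstar - x := by linarith
        have := div_nonpos_iff.mp hDt
        rcases this with ⟨h1, h2⟩ | ⟨h1, h2⟩
        · linarith
        · nlinarith
      simp only [hhdef] at this
      linarith
    · subst heq; simp
    · -- xstar < x
      have hsub : Set.Icc xstar x ⊆ Set.Ioo ℓ u :=
        fun y hy => ⟨lt_of_lt_of_le hmem.1 hy.1, lt_of_le_of_lt hy.2 hx.2⟩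
      obtain ⟨t, ht, hts⟩ := exists_hasDerivAt_eq_slope h D hgt
        (fun y hy => ((hhderiv y (hsub hy)).continuousAt).continuousWithinAt)
        (fun y hy => hhderiv y (hsub (Set.Ioo_subset_Icc_self hy)))
      have htmem : t ∈ Set.Ioo ℓ u := hsub (Set.Ioo_subset_Icc_self ht)
      have hDt : 0 ≤ D t := by
        rw [← hDstar]
        exact hDmono hmem htmem (le_of_lt ht.1)
      have : 0 ≤ h x - h xstar := by
        rw [hts] at hDt
        have hxs : 0 < x - xstar := by linarith
        have := div_nonneg_iff.mp hDt
        rcases this with ⟨h1, h2⟩ | ⟨h1, h2⟩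
        · linarith
        · nlinarith
      simp only [hhdef] at this
      linarith
  constructor
  · exact main
  · intro ε hε x hx hle
    have h1 := main x hx
    have h2 : c * (x - xstar) ^ 2 ≤ ε := le_trans h1 hle
    have h3 : (x - xstar) ^ 2 ≤ ((u - ℓ) / 2) ^ 2 * ε := by
      rw [hc] at h2
      rw [div_mul_eq_mul_div, div_le_iff₀ (by positivity)] at h2
      nlinarith
    calc |x - xstar| = Real.sqrt ((x - xstar) ^ 2) := (Real.sqrt_sq_eq_abs _).symm
      _ ≤ Real.sqrt (((u - ℓ) / 2) ^ 2 * ε) := Real.sqrt_le_sqrt h3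
      _ = ((u - ℓ) / 2) * Real.sqrt ε := by
          rw [Real.sqrt_mul (by positivity), Real.sqrt_sq (by positivity)]
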